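/- Let G be an Abelian group of cardinality γ > ℵ₀, and let (G_α)_{α<γ} be a family of subgroups of G such that G_0 is trivial, G_α ⊊ G_β for α < β < γ, G_β = ⋃_{α<β} G_α for every limit ordinal β < γ, ⋃_{α<γ} G_α = G, and [G_{α+1} : G_α] = ℵ₀ for each α < γ. For each α < γ, let X_α ⊆ G_{α+1} \ G_α be a transversal, i.e., G_{α+1} \ G_α = X_α·G_α and distinct elements of X_α lie in distinct cosets of G_α. Then every element g ∈ G with g ≠ e admits a representation g = x_s ⋯ x_1 x_0 where x_i ∈ X_{α_i} for i ∈ {0,…,s} and α_0 > α_1 > ⋯ > α_s, and this representation is unique. -/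

import Mathlib

open Cardinal Pointwise

universe u

/-- Given a chain of subgroups `(G_α)_{α<γ}` of an Abelian group `G` of cardinality
`γ > ℵ₀` (with `G_0` trivial, strictly increasing, continuous at limits, union `G`, and
`[G_{α+1} : G_α] = ℵ₀`) and transversals `X_α` of the cosets of `G_α` in
`G_{α+1} \ G_α`, every `g ≠ e` has a unique representation `g = x_s ⋯ x_1 x_0` with
`x_i ∈ X_{α_i}` and `α_0 > α_1 > ⋯ > α_s`; here such a representation is encoded as the
list `[(α_0, x_0), (α_1, x_1), …, (α_s, x_s)]`. -/
theorem existsUnique_representation (γ : Cardinal.{u}) (hγ : ℵ₀ < γ)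
    (G : Type u) [CommGroup G] (hG : #G = γ)
    (Gs : Ordinal.{u} → Subgroup G)
    (h0 : Gs 0 = ⊥)
    (hmono : ∀ α β : Ordinal.{u}, α < β → β < γ.ord → Gs α < Gs β)
    (hlim : ∀ β : Ordinal.{u}, β < γ.ord → Order.IsSuccLimit β →
      (Gs β : Set G) = ⋃ (α : Ordinal.{u}) (_ : α < β), (Gs α : Set G))
    (hunion : (⋃ (α : Ordinal.{u}) (_ : α < γ.ord), (Gs α : Set G)) = Set.univ)
    (hindex : ∀ α : Ordinal.{u}, α < γ.ord →
      #(↥(Gs (α + 1)) ⧸ ((Gs α).subgroupOf (Gs (α + 1)))) = ℵ₀)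
    (X : Ordinal.{u} → Set G)
    (hXsub : ∀ α : Ordinal.{u}, α < γ.ord →
      X α ⊆ (Gs (α + 1) : Set G) \ (Gs α : Set G))
    (hXcover : ∀ α : Ordinal.{u}, α < γ.ord →
      (Gs (α + 1) : Set G) \ (Gs α : Set G) = X α * (Gs α : Set G))
    (hXsep : ∀ α : Ordinal.{u}, α < γ.ord →
      ∀ x ∈ X α, ∀ y ∈ X α, x * y⁻¹ ∈ Gs α → x = y)
    (g : G) (hg : g ≠ 1) :
    ∃! l : List (Ordinal.{u} × G),
      (l.map Prod.fst).Chain' (· > ·) ∧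
      (∀ p ∈ l, p.1 < γ.ord ∧ p.2 ∈ X p.1) ∧
      (l.map Prod.snd).prod = g := by

  classical
  have hlimord : Order.IsSuccLimit γ.ord := Cardinal.isSuccLimit_ord hγ.le
  have hle : ∀ α β : Ordinal.{u}, α ≤ β → β < γ.ord → Gs α ≤ Gs β := by
    intro α β hab hb
    rcases hab.lt_or_eq with h | h
    · exact (hmono α β h hb).le
    · exact h ▸ le_rfl
  have hsucc : ∀ α : Ordinal.{u}, α < γ.ord → α + 1 < γ.ord := by
    intro α hα
    rw [Ordinal.add_one_eq_succ]
    exact hlimord.succ_lt hα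
  -- products of elements with small indices lie in small subgroups
  have hprodmem : ∀ l : List (Ordinal.{u} × G),
      (∀ p ∈ l, p.1 < γ.ord ∧ p.2 ∈ X p.1) →
      ∀ β : Ordinal.{u}, β < γ.ord → (∀ p ∈ l, p.1 < β) →
      (l.map Prod.snd).prod ∈ Gs β := by
    intro l
    induction l with
    | nil => intro _ β hβ _; simpa using one_mem (Gs β)
    | cons p t ih =>
      intro hmem β hβ hlt
      simp only [List.map_cons, List.prod_cons]
      have hp := hmem p (List.mem_cons_self)
      have hp1 : p.1 + 1 ≤ β := by
        rw [Ordinal.add_one_eq_succ]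
        exact Order.succ_le_of_lt (hlt p (List.mem_cons_self))
      have hx : p.2 ∈ Gs (p.1 + 1) := (hXsub p.1 hp.1 hp.2).1
      exact mul_mem (hle _ _ hp1 hβ hx)
        (ih (fun q hq => hmem q (List.mem_cons_of_mem p hq)) β hβ
          (fun q hq => hlt q (List.mem_cons_of_mem p hq)))
  -- head analysis of a valid nonempty list
  have hhead : ∀ (α : Ordinal.{u}) (x : G) (t : List (Ordinal.{u} × G)),
      (((α, x) :: t).map Prod.fst).Chain' (· > ·) →
      (∀ p ∈ (α, x) :: t, p.1 < γ.ord ∧ p.2 ∈ X p.1) →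
      (t.map Prod.snd).prod ∈ Gs α ∧
      (((α, x) :: t).map Prod.snd).prod ∈ Gs (α + 1) ∧
      (((α, x) :: t).map Prod.snd).prod ∉ Gs α := by
    intro α x t hchain hmem
    have hα : α < γ.ord := (hmem (α, x) (List.mem_cons_self)).1
    have hxX : x ∈ X α := (hmem (α, x) (List.mem_cons_self)).2
    have hsmall : ∀ p ∈ t, p.1 < α := by
      intro p hp
      have := (List.isChain_iff_pairwise.mp hchain)
      simp only [List.map_cons, List.pairwise_cons] at this
      exact this.1 p.1 (List.mem_map_of_mem (f := Prod.fst) hp)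
    have htmem : ∀ p ∈ t, p.1 < γ.ord ∧ p.2 ∈ X p.1 :=
      fun p hp => hmem p (List.mem_cons_of_mem _ hp)
    have ht : (t.map Prod.snd).prod ∈ Gs α := hprodmem t htmem α hα hsmall
    refine ⟨ht, ?_, ?_⟩
    · simp only [List.map_cons, List.prod_cons]
      exact mul_mem (hXsub α hα hxX).1 (hle α (α + 1) (le_of_lt (by
        rw [Ordinal.add_one_eq_succ]; exact Order.lt_succ α)) (hsucc α hα) ht)
    · simp only [List.map_cons, List.prod_cons]
      intro hmem'
      exact (hXsub α hα hxX).2 (by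
        have : x = (x * (t.map Prod.snd).prod) * ((t.map Prod.snd).prod)⁻¹ := by group
        rw [this]; exact mul_mem hmem' (inv_mem ht))
  -- existence
  have hexists : ∀ β : Ordinal.{u}, β < γ.ord → ∀ g : G, g ∈ Gs β → g ≠ 1 →
      ∃ l : List (Ordinal.{u} × G),
        (l.map Prod.fst).Chain' (· > ·) ∧
        (∀ p ∈ l, p.1 < γ.ord ∧ p.2 ∈ X p.1) ∧
        (l.map Prod.snd).prod = g ∧ (∀ p ∈ l, p.1 < β) := by
    intro β
    induction β using Ordinal.induction with
    | h β ih =>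
      intro hβ g hgmem hg1
      rcases Ordinal.zero_or_succ_or_isSuccLimit β with h | ⟨δ, rfl⟩ | hβlim
      · subst h
        rw [h0, Subgroup.mem_bot] at hgmem
        exact absurd hgmem hg1
      · rw [← Ordinal.add_one_eq_succ] at *
        have hδ : δ < δ + 1 := by
          rw [Ordinal.add_one_eq_succ]; exact Order.lt_succ δ
        have hδγ : δ < γ.ord := hδ.trans hβ
        by_cases hgδ : g ∈ Gs δ
        · obtain ⟨l, h1, h2, h3, h4⟩ := ih δ hδ hδγ g hgδ hg1
          exact ⟨l, h1, h2, h3, fun p hp => (h4 p hp).trans hδ⟩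
        · have hgdiff : g ∈ (Gs (δ + 1) : Set G) \ (Gs δ : Set G) := ⟨hgmem, hgδ⟩
          rw [hXcover δ hδγ] at hgdiff
          obtain ⟨x, hx, h, hh, rfl⟩ := hgdiff
          by_cases hh1 : h = 1
          · subst hh1
            refine ⟨[(δ, x)], by simp [List.Chain'], ?_, by simp, ?_⟩
            · intro p hp; simp at hp; subst hp; exact ⟨hδγ, hx⟩
            · intro p hp; simp at hp; subst hp; exact hδ
          · obtain ⟨t, h1, h2, h3, h4⟩ := ih δ hδ hδγ h hh hh1
            refine ⟨(δ, x) :: t, ?_, ?_, by simp [h3], ?_⟩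
            · refine List.isChain_iff_pairwise.mpr ?_
              simp only [List.map_cons, List.pairwise_cons]
              refine ⟨?_, List.isChain_iff_pairwise.mp h1⟩
              intro b hb
              obtain ⟨p, hp, rfl⟩ := List.mem_map.mp hb
              exact h4 p hp
            · intro p hp
              rcases List.mem_cons.mp hp with rfl | hp
              · exact ⟨hδγ, hx⟩
              · exact h2 p hp
            · intro p hp
              rcases List.mem_cons.mp hp with rfl | hp
              · exact hδ
              · exact le_of_lt (h4 p hp) |>.trans_lt hδ
      · have : g ∈ ⋃ (α : Ordinal.{u}) (_ : α < β), (Gs α : Set G) := by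
          rw [← hlim β hβ hβlim]; exact hgmem
        simp only [Set.mem_iUnion] at this
        obtain ⟨α, hα, hgα⟩ := this
        obtain ⟨l, h1, h2, h3, h4⟩ := ih α hα (hα.trans hβ) g hgα hg1
        exact ⟨l, h1, h2, h3, fun p hp => (h4 p hp).trans hα⟩
  -- uniqueness
  have huniq : ∀ l₁ l₂ : List (Ordinal.{u} × G),
      (l₁.map Prod.fst).Chain' (· > ·) → (∀ p ∈ l₁, p.1 < γ.ord ∧ p.2 ∈ X p.1) →
      (l₂.map Prod.fst).Chain' (· > ·) → (∀ p ∈ l₂, p.1 < γ.ord ∧ p.2 ∈ X p.1) →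
      (l₁.map Prod.snd).prod = (l₂.map Prod.snd).prod → l₁ = l₂ := by
    intro l₁
    induction l₁ with
    | nil =>
      intro l₂ _ _ hc₂ hm₂ hprod
      cases l₂ with
      | nil => rfl
      | cons p t =>
        obtain ⟨α, x⟩ := p
        exfalso
        have := (hhead α x t hc₂ hm₂).2.2
        rw [← hprod] at this
        simp only [List.map_nil, List.prod_nil] at this
        exact this (one_mem _)
    | cons p t ih =>
        intro l₂ hc₁ hm₁ hc₂ hm₂ hprod
        obtain ⟨α, x⟩ := p
        cases l₂ with
        | nil =>
          exfalso
          have := (hhead α x t hc₁ hm₁).2.2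
          rw [hprod] at this
          simp only [List.map_nil, List.prod_nil] at this
          exact this (one_mem _)
        | cons q s =>
          obtain ⟨α', x'⟩ := q
          have hα : α < γ.ord := (hm₁ _ (List.mem_cons_self)).1
          have hα' : α' < γ.ord := (hm₂ _ (List.mem_cons_self)).1
          have H₁ := hhead α x t hc₁ hm₁
          have H₂ := hhead α' x' s hc₂ hm₂
          have hαα : α = α' := by
            by_contra hne
            rcases lt_or_gt_of_ne hne with hlt | hlt
            · have h1le : α + 1 ≤ α' := by
                rw [Ordinal.add_one_eq_succ]; exact Order.succ_le_of_lt hlt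
              exact H₂.2.2 (hprod ▸ hle (α + 1) α' h1le hα' H₁.2.1)
            · have h1le : α' + 1 ≤ α := by
                rw [Ordinal.add_one_eq_succ]; exact Order.succ_le_of_lt hlt
              exact H₁.2.2 (hprod.symm ▸ hle (α' + 1) α h1le hα H₂.2.1)
          subst hαα
          have hxX : x ∈ X α := (hm₁ _ (List.mem_cons_self)).2
          have hx'X : x' ∈ X α := (hm₂ _ (List.mem_cons_self)).2
          simp only [List.map_cons, List.prod_cons] at hprod
          have hxx' : x = x' := by
            apply hXsep α hα x hxX x' hx'X
            have h2 : x * x'⁻¹ = ((s.map Prod.snd).prod) * ((t.map Prod.snd).prod)⁻¹ := by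
              rw [show x = (x * (t.map Prod.snd).prod) * ((t.map Prod.snd).prod)⁻¹ by group,
                hprod, mul_comm x' ((s.map Prod.snd).prod), mul_right_comm]
              group
            rw [h2]
            exact mul_mem H₂.1 (inv_mem H₁.1)
          subst hxx'
          have hteq : (t.map Prod.snd).prod = (s.map Prod.snd).prod :=
            mul_left_cancel hprod
          have := ih s (hc₁.tail) (fun p hp => hm₁ p (List.mem_cons_of_mem _ hp))
            (hc₂.tail) (fun p hp => hm₂ p (List.mem_cons_of_mem _ hp)) hteq
          rw [this]
  -- conclusion
  have hgu : g ∈ (Set.univ : Set G) := Set.mem_univ g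
  rw [← hunion] at hgu
  simp only [Set.mem_iUnion] at hgu
  obtain ⟨α, hα, hgα⟩ := hgu
  obtain ⟨l, h1, h2, h3, _⟩ := hexists α hα g hgα hg
  refine ⟨l, ⟨h1, h2, h3⟩, ?_⟩
  intro l' ⟨h1', h2', h3'⟩
  exact huniq l' l h1' h2' h1 h2 (h3'.trans h3.symm)
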